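/- Let a, b, c > 0 with c - a - b < 0. Then lim_{z → 1⁻} (1-z)^{a+b-c} F(a,b,c;z) = Γ(c)Γ(a+b-c)/(Γ(a)Γ(b)). -/

import Mathlib

open Real Filter

/-- The Gauss hypergeometric series. -/
noncomputable def hypergeomF (a b c z : ℝ) : ℝ :=
  ∑' k : ℕ, Real.Gamma (a + k) * Real.Gamma (b + k) * Real.Gamma c /
    (Real.Gamma a * Real.Gamma b * Real.Gamma (c + k)) * z ^ k / (Nat.factorial k)

open Set Topology

namespace HGaux

/-- limit of (p+k)/(q+k) -/
lemma tendsto_quot (p q : ℝ) (hq : 0 ≤ q) :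
    Tendsto (fun k : ℕ => (p + k) / (q + k)) atTop (𝓝 1) := by
  have h0 : Tendsto (fun k : ℕ => q + (k : ℝ)) atTop atTop :=
    tendsto_atTop_add_const_left _ _ tendsto_natCast_atTop_atTop
  have h1 : Tendsto (fun k : ℕ => 1 + (p - q) * (q + (k : ℝ))⁻¹) atTop (𝓝 (1 + (p - q) * 0)) :=
    tendsto_const_nhds.add ((h0.inv_tendsto_atTop).const_mul _)
  simp only [mul_zero, add_zero] at h1
  refine h1.congr' ?_
  filter_upwards [eventually_ge_atTop 1] with k hk
  have hk' : (0:ℝ) < q + k := by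
    have : (1:ℝ) ≤ (k:ℝ) := by exact_mod_cast hk
    linarith
  field_simp
  ring

noncomputable def coef (s : ℝ) (k : ℕ) : ℝ := Real.Gamma (s + k) / (Real.Gamma s * k.factorial)

lemma coef_pos {s : ℝ} (hs : 0 < s) (k : ℕ) : 0 < coef s k := by
  have h1 : 0 < Real.Gamma (s + k) := Real.Gamma_pos_of_pos (by positivity)
  have h2 : 0 < Real.Gamma s := Real.Gamma_pos_of_pos hs
  have h3 : 0 < (k.factorial : ℝ) := by exact_mod_cast k.factorial_pos
  exact div_pos h1 (by positivity)

lemma coef_zero {s : ℝ} (hs : 0 < s) : coef s 0 = 1 := by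
  have h2 : Real.Gamma s ≠ 0 := (Real.Gamma_pos_of_pos hs).ne'
  simp [coef, h2]

lemma coef_succ {s : ℝ} (hs : 0 < s) (k : ℕ) :
    coef s (k + 1) = coef s k * ((s + k) / (k + 1)) := by
  have h1 : s + ((k : ℝ) + 1) = (s + k) + 1 := by ring
  have h2 : Real.Gamma (s + (k + 1 : ℕ)) = (s + k) * Real.Gamma (s + k) := by
    push_cast
    rw [h1, Real.Gamma_add_one (by positivity)]
  have h3 : ((k+1).factorial : ℝ) = (k + 1) * k.factorial := by
    rw [Nat.factorial_succ]; push_cast; ring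
  have h4 : Real.Gamma s ≠ 0 := (Real.Gamma_pos_of_pos hs).ne'
  have h5 : ((k.factorial : ℝ)) ≠ 0 := by exact_mod_cast k.factorial_pos.ne'
  have h6 : ((k:ℝ) + 1) ≠ 0 := by positivity
  rw [coef, coef, h2, h3]
  field_simp

end HGaux

namespace HGaux

lemma summable_coef_mul {s : ℝ} (hs : 0 < s) {y : ℝ} (hy : |y| < 1) :
    Summable (fun k => coef s k * y ^ k) := by
  rcases eq_or_ne y 0 with rfl | hy0
  · rw [← summable_nat_add_iff 1]
    have : (fun n : ℕ => coef s (n + 1) * (0:ℝ) ^ (n + 1)) = fun _ => 0 := by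
      funext n; simp
    rw [this]; exact summable_zero
  · have hy' : 0 < |y| := abs_pos.mpr hy0
    refine summable_of_ratio_test_tendsto_lt_one hy ?_ ?_
    · filter_upwards with k
      exact mul_ne_zero (coef_pos hs k).ne' (pow_ne_zero _ hy0)
    · have h1 : Tendsto (fun k : ℕ => (s + k) / (1 + k) * |y|) atTop (𝓝 (1 * |y|)) :=
        (tendsto_quot s 1 zero_le_one).mul_const _
      rw [one_mul] at h1
      refine h1.congr ?_
      intro k
      have hc := coef_pos hs k
      have h2 : ‖coef s (k+1) * y ^ (k+1)‖ = coef s k * ((s + k)/(k+1)) * (|y|^k * |y|) := by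
        rw [norm_mul, norm_pow, Real.norm_eq_abs, Real.norm_eq_abs,
          abs_of_pos (coef_pos hs (k+1)), coef_succ hs, pow_succ]
      have h3 : ‖coef s k * y ^ k‖ = coef s k * |y| ^ k := by
        rw [norm_mul, norm_pow, Real.norm_eq_abs, Real.norm_eq_abs, abs_of_pos hc]
      rw [h2, h3]
      have hyk : (0:ℝ) < |y| ^ k := pow_pos hy' k
      have hk1 : ((k:ℝ) + 1) ≠ 0 := by positivity
      field_simp
      ring

lemma summable_deriv_bound {s : ℝ} (hs : 0 < s) {r : ℝ} (hr0 : 0 < r) (hr : r < 1) :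
    Summable (fun k : ℕ => coef s k * (k * r ^ (k - 1))) := by
  refine summable_of_ratio_test_tendsto_lt_one hr ?_ ?_
  · filter_upwards [eventually_ge_atTop 1] with k hk
    have hkp : 0 < (k:ℝ) := by exact_mod_cast hk
    exact (mul_pos (coef_pos hs k) (mul_pos hkp (pow_pos hr0 _))).ne'
  · have h1 : Tendsto (fun k : ℕ => (s + k) / (0 + k) * r) atTop (𝓝 (1 * r)) :=
      (tendsto_quot s 0 le_rfl).mul_const _
    rw [one_mul] at h1
    refine h1.congr' ?_
    filter_upwards [eventually_ge_atTop 1] with k hk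
    have hk0 : (0:ℝ) < (k:ℝ) := by exact_mod_cast hk
    have hc := coef_pos hs k
    have hrk : (0:ℝ) < r ^ (k-1) := pow_pos hr0 _
    have hkk : k - 1 + 1 = k := Nat.succ_pred_eq_of_pos hk
    have h2 : ‖coef s (k+1) * (((k:ℕ)+1 : ℕ) * r ^ ((k+1) - 1))‖
        = coef s k * ((s + k)/(k+1)) * ((k+1) * (r ^ (k-1) * r)) := by
      rw [Nat.add_sub_cancel, norm_mul, Real.norm_eq_abs, Real.norm_eq_abs,
        abs_of_pos (coef_pos hs (k+1)), coef_succ hs]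
      have : r ^ k = r ^ (k-1) * r := by rw [← pow_succ, hkk]
      rw [this, abs_of_pos (by positivity)]
      push_cast
      ring
    have h3 : ‖coef s k * (k * r ^ (k - 1))‖ = coef s k * (k * r ^ (k-1)) := by
      rw [Real.norm_eq_abs, abs_of_pos (by positivity)]
    rw [h2, h3]
    have hk1 : ((k:ℝ) + 1) ≠ 0 := by positivity
    field_simp
    ring

end HGaux

namespace HGaux

lemma pow_shift (y : ℝ) (n : ℕ) : (n:ℝ) * y ^ n = y * ((n:ℝ) * y ^ (n-1)) := by
  cases n with
  | zero => simp
  | succ m => rw [Nat.add_sub_cancel, pow_succ']; push_cast; ring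

lemma hasSum_binom {s : ℝ} (hs : 0 < s) {x : ℝ} (hx0 : 0 ≤ x) (hx : x < 1) :
    HasSum (fun k : ℕ => coef s k * x ^ k) ((1 - x) ^ (-s)) := by
  have hxabs : |x| < 1 := by rw [abs_of_nonneg hx0]; exact hx
  set g : ℝ → ℝ := fun y => ∑' k : ℕ, coef s k * y ^ k with hg
  have Sg : HasSum (fun k : ℕ => coef s k * x ^ k) (g x) :=
    (summable_coef_mul hs hxabs).hasSum
  suffices hgx : g x = (1 - x) ^ (-s) by rwa [hgx] at Sg
  set r : ℝ := (1 + x) / 2 with hrdef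
  have hr0 : 0 < r := by rw [hrdef]; linarith
  have hr1 : r < 1 := by rw [hrdef]; linarith
  have hxr : x < r := by rw [hrdef]; linarith
  set t : Set ℝ := Ioo (-r) r with ht
  have hmem : ∀ y ∈ t, |y| < 1 := by
    intro y hy
    rcases hy with ⟨h1, h2⟩
    rw [abs_lt]; constructor <;> linarith
  have h0t : (0:ℝ) ∈ t := ⟨by linarith, hr0⟩
  have hxt : x ∈ t := ⟨by linarith, hxr⟩
  set d : ℝ → ℝ := fun y => ∑' k : ℕ, coef s k * ((k:ℝ) * y ^ (k-1)) with hd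
  have hbound : ∀ (k : ℕ) (y : ℝ), y ∈ t →
      ‖coef s k * ((k:ℝ) * y ^ (k-1))‖ ≤ coef s k * ((k:ℝ) * r ^ (k-1)) := by
    intro k y hy
    rw [norm_mul, norm_mul, norm_pow, Real.norm_eq_abs, Real.norm_eq_abs, Real.norm_eq_abs,
      abs_of_pos (coef_pos hs k), Nat.abs_cast]
    have hyr : |y| ≤ r := by
      rcases hy with ⟨h1, h2⟩; rw [abs_le]; constructor <;> linarith
    gcongr <;> first
      | exact (coef_pos hs k).le
      | exact abs_nonneg y
      | exact hyr
  have hu := summable_deriv_bound hs hr0 hr1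
  have hderiv : ∀ y ∈ t, HasDerivAt g (d y) y := by
    intro y hy
    exact hasDerivAt_tsum_of_isPreconnected hu isOpen_Ioo (convex_Ioo _ _).isPreconnected
      (fun k z _ => (hasDerivAt_pow k z).const_mul (coef s k))
      hbound h0t (summable_coef_mul hs (by simpa using hmem 0 h0t)) hy
  have hsumd : ∀ y ∈ t, HasSum (fun k : ℕ => coef s k * ((k:ℝ) * y ^ (k-1))) (d y) := by
    intro y hy
    exact (Summable.of_norm_bounded hu (fun k => hbound k y hy)).hasSum
  have hode : ∀ y ∈ t, (1 - y) * d y = s * g y := by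
    intro y hy
    have Sgy : HasSum (fun k : ℕ => coef s k * y ^ k) (g y) :=
      (summable_coef_mul hs (hmem y hy)).hasSum
    have Sdy := hsumd y hy
    have S1 := (hasSum_nat_add_iff'
      (f := fun k : ℕ => coef s k * ((k:ℝ) * y ^ (k-1))) 1).mpr Sdy
    simp only [Finset.sum_range_one, Nat.cast_zero, zero_mul, mul_zero, sub_zero,
      Nat.add_sub_cancel, Nat.cast_add, Nat.cast_one] at S1
    have key : ∀ n : ℕ, coef s (n+1) * (((n:ℝ)+1) * y ^ n)
        = s * (coef s n * y ^ n) + y * (coef s n * ((n:ℝ) * y ^ (n-1))) := by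
      intro n
      have h2 : y * (coef s n * ((n:ℝ) * y ^ (n-1))) = coef s n * ((n:ℝ) * y ^ n) := by
        rw [pow_shift y n]; ring
      rw [h2, coef_succ hs]
      have hn1 : ((n:ℝ)+1) ≠ 0 := by positivity
      field_simp
    simp only [key] at S1
    have S3 : HasSum (fun n : ℕ => s * (coef s n * y ^ n) + y * (coef s n * ((n:ℝ) * y ^ (n-1))))
        (s * g y + y * d y) := (Sgy.mul_left s).add (Sdy.mul_left y)
    have heq : d y = s * g y + y * d y := S1.unique S3
    linear_combination heq
  -- h y := (1-y)^s * g y has zero derivative on t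
  have hds : ∀ y ∈ t, HasDerivAt (fun z => (1 - z) ^ s * g z) 0 y := by
    intro y hy
    have hy1 : 0 < 1 - y := by rcases hy with ⟨_, h2⟩; linarith
    have d1 : HasDerivAt (fun z : ℝ => 1 - z) (-1) y := (hasDerivAt_id y).const_sub 1
    have d2 : HasDerivAt (fun z : ℝ => (1 - z) ^ s) (-1 * s * (1 - y) ^ (s - 1)) y :=
      d1.rpow_const (Or.inl hy1.ne')
    have d3 := d2.mul (hderiv y hy)
    have hcalc : -1 * s * (1 - y) ^ (s - 1) * g y + (1 - y) ^ s * d y = 0 := by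
      have hpow : (1 - y) ^ s = (1 - y) ^ (s - 1) * (1 - y) := by
        rw [← Real.rpow_add_one hy1.ne' (s-1)]; ring_nf
      rw [hpow]
      linear_combination (1 - y) ^ (s - 1) * hode y hy
    rwa [hcalc] at d3
  -- constancy on [0, x]
  have hsub : Icc (0:ℝ) x ⊆ t := by
    intro y hy
    rcases hy with ⟨h1, h2⟩
    exact ⟨by linarith, by linarith⟩
  have hconst := constant_of_has_deriv_right_zero
    (f := fun z => (1 - z) ^ s * g z) (a := 0) (b := x)
    (fun y hy => ((hds y (hsub hy)).continuousAt).continuousWithinAt)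
    (fun y hy => ((hds y (hsub (Ico_subset_Icc_self hy))).hasDerivWithinAt))
    x (right_mem_Icc.mpr hx0)
  have hg0 : g 0 = 1 := by
    have h' : g 0 = ∑' k : ℕ, coef s k * (0:ℝ) ^ k := rfl
    rw [h', tsum_eq_single 0 (fun k hk => by simp [zero_pow hk])]
    simp [coef_zero hs]
  simp only [sub_zero, Real.one_rpow, mul_one] at hconst
  rw [hg0] at hconst
  -- hconst : (1-x)^s * g x = 1
  have hx1 : (0:ℝ) < 1 - x := by linarith
  rw [Real.rpow_neg hx1.le]
  field_simp at hconst ⊢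
  linarith [hconst]

end HGaux

namespace HGaux

lemma G_tendsto_atTop {s : ℝ} (hs : 0 < s) :
    Tendsto (fun z : ℝ => (1 - z) ^ (-s)) (nhdsWithin 1 (Set.Iio 1)) atTop := by
  have h1 : Tendsto (fun z : ℝ => 1 - z) (nhdsWithin 1 (Set.Iio 1)) (nhdsWithin 0 (Set.Ioi 0)) := by
    rw [tendsto_nhdsWithin_iff]
    constructor
    · have hcts : Continuous (fun z : ℝ => 1 - z) := continuous_const.sub continuous_id
      have := hcts.tendsto 1
      simp only [sub_self] at this
      exact this.mono_left nhdsWithin_le_nhds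
    · filter_upwards [self_mem_nhdsWithin] with z hz
      exact sub_pos.mpr (Set.mem_Iio.mp hz)
  have h2 : Tendsto (fun t : ℝ => t ^ s) (nhdsWithin 0 (Set.Ioi 0)) (nhdsWithin 0 (Set.Ioi 0)) := by
    rw [tendsto_nhdsWithin_iff]
    constructor
    · have hc : ContinuousAt (fun t : ℝ => t ^ s) 0 :=
        Real.continuousAt_rpow_const 0 s (Or.inr hs.le)
      have := hc.tendsto
      rw [Real.zero_rpow hs.ne'] at this
      exact this.mono_left nhdsWithin_le_nhds
    · filter_upwards [self_mem_nhdsWithin] with t ht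
      exact Real.rpow_pos_of_pos ht s
  have h3 : Tendsto (fun t : ℝ => (t ^ s)⁻¹) (nhdsWithin 0 (Set.Ioi 0)) atTop :=
    h2.inv_tendsto_nhdsGT_zero
  have h4 := h3.comp h1
  refine h4.congr' ?_
  filter_upwards [self_mem_nhdsWithin] with z hz
  have : (0:ℝ) < 1 - z := sub_pos.mpr hz
  simp only [Function.comp]
  rw [Real.rpow_neg this.le]

/-- Abel-type comparison: if `A k / B k → L` with `B k > 0`, and the power series of `B`
sums to `G z` which blows up at `1⁻`, then `F z / G z → L`. -/
lemma abel_comparison (A B : ℕ → ℝ) (hBpos : ∀ k, 0 < B k) (L : ℝ)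
    (hAB : Tendsto (fun k => A k / B k) atTop (𝓝 L))
    (F G : ℝ → ℝ)
    (hF : ∀ z ∈ Set.Ioo (0:ℝ) 1, HasSum (fun k => A k * z ^ k) (F z))
    (hG : ∀ z ∈ Set.Ioo (0:ℝ) 1, HasSum (fun k => B k * z ^ k) (G z))
    (hGtop : Tendsto G (nhdsWithin 1 (Set.Iio 1)) atTop) :
    Tendsto (fun z => F z / G z) (nhdsWithin 1 (Set.Iio 1)) (𝓝 L) := by
  rw [Metric.tendsto_nhds]
  intro ε hε
  have hε3 : 0 < ε / 3 := by linarith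
  -- eventually |A k - L B k| ≤ (ε/3) B k
  obtain ⟨N, hN⟩ : ∃ N, ∀ k ≥ N, |A k - L * B k| ≤ ε / 3 * B k := by
    have := (Metric.tendsto_nhds.mp hAB) (ε/3) hε3
    rw [eventually_atTop] at this
    obtain ⟨N, hN⟩ := this
    refine ⟨N, fun k hk => ?_⟩
    have h1 := hN k hk
    rw [Real.dist_eq] at h1
    have hBk := hBpos k
    have h2 : |A k / B k - L| * B k ≤ ε / 3 * B k := by
      apply mul_le_mul_of_nonneg_right h1.le hBk.le
    calc |A k - L * B k| = |(A k / B k - L) * B k| := by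
          rw [sub_mul, div_mul_cancel₀ _ hBk.ne']
      _ = |A k / B k - L| * B k := by rw [abs_mul, abs_of_pos hBk]
      _ ≤ ε / 3 * B k := h2
  set C : ℝ := ∑ k ∈ Finset.range N, |A k - L * B k| with hC
  have hC0 : 0 ≤ C := Finset.sum_nonneg fun k _ => abs_nonneg _
  -- main estimate on Ioo 0 1
  have hmain : ∀ z ∈ Set.Ioo (0:ℝ) 1, |F z - L * G z| ≤ C + ε / 3 * G z := by
    intro z hz
    obtain ⟨hz0, hz1⟩ := hz
    have hFz := hF z ⟨hz0, hz1⟩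
    have hGz := hG z ⟨hz0, hz1⟩
    have hdiff : HasSum (fun k => (A k - L * B k) * z ^ k) (F z - L * G z) := by
      have := hFz.sub (hGz.mul_left L)
      refine this.congr_fun fun k => ?_
      ring
    have hsum_abs : Summable (fun k => |(A k - L * B k) * z ^ k|) := hdiff.summable.abs
    have h1 : |F z - L * G z| ≤ ∑' k, |(A k - L * B k) * z ^ k| := by
      rw [← hdiff.tsum_eq]
      have hn := norm_tsum_le_tsum_norm (f := fun k => (A k - L * B k) * z ^ k)
        (by simpa only [Real.norm_eq_abs] using hsum_abs)
      simpa only [Real.norm_eq_abs] using hn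
    have hsplit := Summable.sum_add_tsum_nat_add N hsum_abs
    have hhead : ∑ k ∈ Finset.range N, |(A k - L * B k) * z ^ k| ≤ C := by
      apply Finset.sum_le_sum
      intro k _
      rw [abs_mul]
      have : |z ^ k| ≤ 1 := by
        rw [abs_pow]
        exact pow_le_one₀ (abs_nonneg z) (by rw [abs_of_pos hz0]; exact hz1.le)
      calc |A k - L * B k| * |z ^ k| ≤ |A k - L * B k| * 1 :=
            mul_le_mul_of_nonneg_left this (abs_nonneg _)
        _ = |A k - L * B k| := mul_one _
    have htail : ∑' k : ℕ, |(A (k + N) - L * B (k + N)) * z ^ (k + N)| ≤ ε / 3 * G z := by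
      have hBsum : Summable (fun k : ℕ => B (k + N) * z ^ (k + N)) :=
        (hGz.summable.comp_injective (add_left_injective N))
      have hle : ∀ k : ℕ, |(A (k + N) - L * B (k + N)) * z ^ (k + N)|
          ≤ ε / 3 * (B (k + N) * z ^ (k + N)) := by
        intro k
        rw [abs_mul, abs_pow, abs_of_pos hz0]
        have h2 := hN (k + N) (Nat.le_add_left N k)
        have h3 : (0:ℝ) ≤ z ^ (k + N) := by positivity
        calc |A (k + N) - L * B (k + N)| * z ^ (k + N)
            ≤ ε / 3 * B (k + N) * z ^ (k + N) := mul_le_mul_of_nonneg_right h2 h3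
          _ = ε / 3 * (B (k + N) * z ^ (k + N)) := by ring
      calc ∑' k : ℕ, |(A (k + N) - L * B (k + N)) * z ^ (k + N)|
          ≤ ∑' k : ℕ, ε / 3 * (B (k + N) * z ^ (k + N)) := by
            apply Summable.tsum_le_tsum hle (hsum_abs.comp_injective (add_left_injective N))
              (hBsum.mul_left _)
        _ = ε / 3 * ∑' k : ℕ, B (k + N) * z ^ (k + N) := tsum_mul_left
        _ ≤ ε / 3 * G z := by
            apply mul_le_mul_of_nonneg_left _ hε3.le
            have := Summable.sum_add_tsum_nat_add N hGz.summable
            have hhead0 : 0 ≤ ∑ k ∈ Finset.range N, B k * z ^ k :=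
              Finset.sum_nonneg fun k _ => mul_nonneg (hBpos k).le (pow_nonneg hz0.le k)
            rw [← hGz.tsum_eq]
            linarith
    calc |F z - L * G z| ≤ ∑' k, |(A k - L * B k) * z ^ k| := h1
      _ = (∑ k ∈ Finset.range N, |(A k - L * B k) * z ^ k|)
          + ∑' k : ℕ, |(A (k + N) - L * B (k + N)) * z ^ (k + N)| := hsplit.symm
      _ ≤ C + ε / 3 * G z := add_le_add hhead htail
  -- now conclude
  have hev1 : ∀ᶠ z in nhdsWithin 1 (Set.Iio 1), z ∈ Set.Ioo (0:ℝ) 1 := by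
    have h0 : Set.Ioi (0:ℝ) ∈ nhdsWithin 1 (Set.Iio 1) :=
      nhdsWithin_le_nhds (Ioi_mem_nhds one_pos)
    filter_upwards [h0, self_mem_nhdsWithin] with z h1 h2
    exact ⟨h1, h2⟩
  have hev2 : ∀ᶠ z in nhdsWithin 1 (Set.Iio 1), C / (ε/3) + 1 ≤ G z :=
    hGtop.eventually_ge_atTop _
  filter_upwards [hev1, hev2] with z hz hGz
  have hGpos : 0 < G z := by
    have h0 : 0 ≤ C / (ε/3) := div_nonneg hC0 hε3.le
    linarith
  rw [Real.dist_eq]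
  have hm := hmain z hz
  have h4 : F z / G z - L = (F z - L * G z) / G z := by
    rw [sub_div, mul_div_assoc, div_self hGpos.ne', mul_one]
  rw [h4, abs_div, abs_of_pos hGpos, div_lt_iff₀ hGpos]
  have h5 : C ≤ ε / 3 * G z := by
    have h51 : ε / 3 * (C / (ε/3) + 1) ≤ ε / 3 * G z := mul_le_mul_of_nonneg_left hGz hε3.le
    have heq : ε / 3 * (C / (ε/3) + 1) = C + ε/3 := by field_simp
    linarith
  have h7 : ε * G z = 3 * (ε / 3 * G z) := by ring
  linarith [hm, h5, mul_pos hε3 hGpos, h7]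

end HGaux

namespace HGaux

noncomputable def prodc (x : ℝ) (k : ℕ) : ℝ := ∏ j ∈ Finset.range k, (x + j)

lemma prodc_pos {x : ℝ} (hx : 0 < x) (k : ℕ) : 0 < prodc x k :=
  Finset.prod_pos fun j _ => by positivity

lemma Gamma_add_nat {x : ℝ} (hx : 0 < x) (k : ℕ) :
    Real.Gamma (x + k) = Real.Gamma x * prodc x k := by
  induction k with
  | zero => simp [prodc]
  | succ n ih =>
    have h1 : x + ((n:ℕ) + 1 : ℕ) = (x + n) + 1 := by push_cast; ring
    rw [h1, Real.Gamma_add_one (by positivity), ih]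
    unfold prodc
    rw [Finset.prod_range_succ]
    ring

lemma coef_eq_prodc {x : ℝ} (hx : 0 < x) (k : ℕ) :
    coef x k = prodc x k / k.factorial := by
  rw [coef, Gamma_add_nat hx k]
  have h4 : Real.Gamma x ≠ 0 := (Real.Gamma_pos_of_pos hx).ne'
  field_simp

lemma gammaSeq_eq (x : ℝ) (n : ℕ) :
    Real.GammaSeq x n = (n:ℝ) ^ x * n.factorial / prodc x (n + 1) := rfl

lemma ratio_tendsto {a b c s : ℝ} (ha : 0 < a) (hb : 0 < b) (hc : 0 < c) (hs : 0 < s)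
    (hrel : a + b = c + s) :
    Tendsto (fun k : ℕ => prodc a k * prodc b k / (prodc c k * prodc s k)) atTop
      (𝓝 (Real.Gamma c * Real.Gamma s / (Real.Gamma a * Real.Gamma b))) := by
  have hga : 0 < Real.Gamma a := Real.Gamma_pos_of_pos ha
  have hgb : 0 < Real.Gamma b := Real.Gamma_pos_of_pos hb
  have key : Tendsto (fun n : ℕ =>
      Real.GammaSeq c n * Real.GammaSeq s n / (Real.GammaSeq a n * Real.GammaSeq b n)) atTop
      (𝓝 (Real.Gamma c * Real.Gamma s / (Real.Gamma a * Real.Gamma b))) :=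
    ((Real.GammaSeq_tendsto_Gamma c).mul (Real.GammaSeq_tendsto_Gamma s)).div
      ((Real.GammaSeq_tendsto_Gamma a).mul (Real.GammaSeq_tendsto_Gamma b))
      (mul_pos hga hgb).ne'
  have hshift : Tendsto (fun n : ℕ =>
      prodc a (n+1) * prodc b (n+1) / (prodc c (n+1) * prodc s (n+1))) atTop
      (𝓝 (Real.Gamma c * Real.Gamma s / (Real.Gamma a * Real.Gamma b))) := by
    refine key.congr' ?_
    filter_upwards [eventually_ge_atTop 1] with n hn
    have hn0 : (0:ℝ) < (n:ℝ) := by exact_mod_cast hn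
    have hfac : (0:ℝ) < (n.factorial : ℝ) := by exact_mod_cast n.factorial_pos
    have hpow : ∀ x : ℝ, (0:ℝ) < (n:ℝ) ^ x := fun x => Real.rpow_pos_of_pos hn0 x
    have hq : ∀ x : ℝ, 0 < x → (0:ℝ) < prodc x (n+1) := fun x hx => prodc_pos hx _
    have hab : (n:ℝ) ^ a * (n:ℝ) ^ b = (n:ℝ) ^ c * (n:ℝ) ^ s := by
      rw [← Real.rpow_add hn0, ← Real.rpow_add hn0, hrel]
    rw [gammaSeq_eq, gammaSeq_eq, gammaSeq_eq, gammaSeq_eq]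
    have e1 : (n:ℝ)^c * n.factorial / prodc c (n+1) * ((n:ℝ)^s * n.factorial / prodc s (n+1))
        / ((n:ℝ)^a * n.factorial / prodc a (n+1) * ((n:ℝ)^b * n.factorial / prodc b (n+1)))
        = ((n:ℝ)^c * (n:ℝ)^s) / ((n:ℝ)^a * (n:ℝ)^b)
          * (prodc a (n+1) * prodc b (n+1) / (prodc c (n+1) * prodc s (n+1))) := by
      have h1 := (hq a ha).ne'
      have h2 := (hq b hb).ne'
      have h3 := (hq c hc).ne'
      have h4 := (hq s hs).ne'
      have h5 := (hpow a).ne'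
      have h6 := (hpow b).ne'
      have h7 := hfac.ne'
      field_simp
    rw [e1, ← hab, div_self (mul_pos (hpow a) (hpow b)).ne', one_mul]
  exact (tendsto_add_atTop_iff_nat 1).mp hshift

end HGaux

namespace HGaux

lemma A_succ {a b c : ℝ} (ha : 0 < a) (hb : 0 < b) (hc : 0 < c) (k : ℕ) :
    coef a (k+1) * coef b (k+1) / coef c (k+1)
      = coef a k * coef b k / coef c k * ((a+k) * (b+k) / ((c+k) * (k+1))) := by
  rw [coef_succ ha, coef_succ hb, coef_succ hc]
  have h1 := (coef_pos hc k).ne'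
  have h2 : ((k:ℝ) + 1) ≠ 0 := by positivity
  have h3 : (c + k) ≠ 0 := by positivity
  field_simp

lemma summable_A {a b c : ℝ} (ha : 0 < a) (hb : 0 < b) (hc : 0 < c)
    {z : ℝ} (hz0 : 0 < z) (hz1 : z < 1) :
    Summable (fun k => coef a k * coef b k / coef c k * z ^ k) := by
  have hApos : ∀ k, 0 < coef a k * coef b k / coef c k := fun k =>
    div_pos (mul_pos (coef_pos ha k) (coef_pos hb k)) (coef_pos hc k)
  refine summable_of_ratio_test_tendsto_lt_one hz1 ?_ ?_
  · filter_upwards with k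
    exact (mul_pos (hApos k) (pow_pos hz0 k)).ne'
  · have h1 : Tendsto (fun k : ℕ => (a + k)/(c + k) * ((b + k)/(1 + k)) * z) atTop
        (𝓝 (1 * 1 * z)) :=
      ((tendsto_quot a c hc.le).mul (tendsto_quot b 1 zero_le_one)).mul_const z
    rw [one_mul, one_mul] at h1
    refine h1.congr fun k => ?_
    have hc1 : (0:ℝ) < c + k := by positivity
    have hk1 : (0:ℝ) < (k:ℝ) + 1 := by positivity
    have hzk : (0:ℝ) < z ^ k := pow_pos hz0 k
    rw [Real.norm_eq_abs, Real.norm_eq_abs,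
      abs_of_pos (mul_pos (hApos (k+1)) (pow_pos hz0 (k+1))),
      abs_of_pos (mul_pos (hApos k) hzk), A_succ ha hb hc, pow_succ]
    have n1 := (coef_pos ha k).ne'
    have n2 := (coef_pos hb k).ne'
    have n3 := (coef_pos hc k).ne'
    field_simp
    ring

end HGaux

open HGaux

/-- Power-type blow-up of `F(a,b,c;z)` at `z = 1` when `c - a - b < 0`:
`(1-z)^{a+b-c} F(a,b,c;z) → Γ(c)Γ(a+b-c)/(Γ(a)Γ(b))` as `z → 1⁻`. -/
theorem hypergeom_power_blowup (a b c : ℝ) (ha : 0 < a) (hb : 0 < b) (hc : 0 < c)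
    (h : c - a - b < 0) :
    Tendsto (fun z : ℝ => (1 - z) ^ (a + b - c) * hypergeomF a b c z)
      (nhdsWithin 1 (Set.Iio 1))
      (nhds (Real.Gamma c * Real.Gamma (a + b - c) / (Real.Gamma a * Real.Gamma b))) := by
  have hs : 0 < a + b - c := by linarith
  set s : ℝ := a + b - c with hsdef
  have hrel : a + b = c + s := by rw [hsdef]; ring
  set A : ℕ → ℝ := fun k => coef a k * coef b k / coef c k with hA
  have hApos : ∀ k, 0 < A k := fun k =>
    div_pos (mul_pos (coef_pos ha k) (coef_pos hb k)) (coef_pos hc k)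
  have hAcoef : ∀ k, A k / coef s k
      = prodc a k * prodc b k / (prodc c k * prodc s k) := by
    intro k
    rw [hA]
    simp only []
    rw [coef_eq_prodc ha, coef_eq_prodc hb, coef_eq_prodc hc, coef_eq_prodc hs]
    have h1 := (prodc_pos hc k).ne'
    have h2 := (prodc_pos hs k).ne'
    have h3 : ((k.factorial : ℝ)) ≠ 0 := by exact_mod_cast k.factorial_pos.ne'
    field_simp
  have hratio : Tendsto (fun k => A k / coef s k) atTop
      (𝓝 (Real.Gamma c * Real.Gamma s / (Real.Gamma a * Real.Gamma b))) :=
    (ratio_tendsto ha hb hc hs hrel).congr fun k => (hAcoef k).symm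
  have hFsum : ∀ z ∈ Set.Ioo (0:ℝ) 1, HasSum (fun k => A k * z ^ k) (hypergeomF a b c z) := by
    intro z hz
    have h1 := (summable_A ha hb hc hz.1 hz.2).hasSum
    have h2 : hypergeomF a b c z = ∑' k, A k * z ^ k := by
      rw [hypergeomF]
      apply tsum_congr
      intro k
      rw [hA]
      simp only [coef]
      have g1 : Real.Gamma a ≠ 0 := (Real.Gamma_pos_of_pos ha).ne'
      have g2 : Real.Gamma b ≠ 0 := (Real.Gamma_pos_of_pos hb).ne'
      have g3 : Real.Gamma (c + k) ≠ 0 := (Real.Gamma_pos_of_pos (by positivity)).ne'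
      have g4 : Real.Gamma c ≠ 0 := (Real.Gamma_pos_of_pos hc).ne'
      have g5 : ((k.factorial : ℝ)) ≠ 0 := by exact_mod_cast k.factorial_pos.ne'
      field_simp
    rw [h2]
    exact h1
  have hGsum : ∀ z ∈ Set.Ioo (0:ℝ) 1, HasSum (fun k => coef s k * z ^ k) ((1 - z) ^ (-s)) :=
    fun z hz => hasSum_binom hs hz.1.le hz.2
  have habel := abel_comparison A (coef s) (coef_pos hs)
    (Real.Gamma c * Real.Gamma s / (Real.Gamma a * Real.Gamma b)) hratio
    (hypergeomF a b c) (fun z => (1 - z) ^ (-s)) hFsum hGsum (G_tendsto_atTop hs)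
  refine Tendsto.congr' ?_ habel
  filter_upwards [self_mem_nhdsWithin] with z hz
  have h1 : (0:ℝ) < 1 - z := sub_pos.mpr (Set.mem_Iio.mp hz)
  rw [Real.rpow_neg h1.le]
  field_simp
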